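/- Let u: ℤ → ℂ be a finitely supported 1D filter with û(0) = 1, let n ≥ 1, and let a^{2D} be the 2D filter defined by â^{2D}(ω₁,ω₂) = ½[û(ω₁+ω₂) + û(ω₁−ω₂)e^{−iω₂}]. Then a^{2D} has order n sum rules with respect to M_{√2} if and only if u has order n linear-phase moments with phase 1/2. -/

import Mathlib

open Complex Real

lemma expSum_hasDerivAt {ι : Type*} (s : Finset ι) (c b : ι → ℂ) (ε : ℝ) :
    HasDerivAt (fun t : ℝ => ∑ k ∈ s, c k * Complex.exp (b k * t))
      (∑ k ∈ s, c k * b k * Complex.exp (b k * ε)) ε := by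
  apply HasDerivAt.fun_sum
  intro k _
  have h1 : HasDerivAt (fun t : ℝ => (b k) * (t : ℂ)) (b k) ε := by
    simpa using (Complex.ofRealCLM.hasDerivAt (x := ε)).const_mul (b k)
  have := (h1.cexp).const_mul (c k)
  rw [show c k * b k * Complex.exp (b k * ε) = c k * (Complex.exp (b k * ε) * b k) by ring]
  exact this

lemma expSum_iteratedDeriv {ι : Type*} (s : Finset ι) (j : ℕ) (c b : ι → ℂ) :
    iteratedDeriv j (fun t : ℝ => ∑ k ∈ s, c k * Complex.exp (b k * t)) =
      fun t : ℝ => ∑ k ∈ s, c k * (b k) ^ j * Complex.exp (b k * t) := by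
  induction j generalizing c with
  | zero => simp
  | succ m ih =>
    have hd : deriv (fun t : ℝ => ∑ k ∈ s, c k * Complex.exp (b k * t)) =
        fun t : ℝ => ∑ k ∈ s, (c k * b k) * Complex.exp (b k * t) := by
      funext ε; exact (expSum_hasDerivAt s c b ε).deriv
    rw [iteratedDeriv_succ', hd, ih (fun k => c k * b k)]
    funext t
    exact Finset.sum_congr rfl (fun k _ => by ring)

lemma expSum_iteratedDeriv_zero {ι : Type*} (s : Finset ι) (j : ℕ) (c b : ι → ℂ) :
    iteratedDeriv j (fun t : ℝ => ∑ k ∈ s, c k * Complex.exp (b k * t)) 0 =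
      ∑ k ∈ s, c k * (b k) ^ j := by
  rw [expSum_iteratedDeriv]; simp

lemma coeff_linear_pow (b c : ℂ) (j t : ℕ) :
    ((Polynomial.C b * Polynomial.X + Polynomial.C c) ^ j).coeff t
      = (j.choose t : ℂ) * b ^ t * c ^ (j - t) := by
  rw [add_pow, Polynomial.finset_sum_coeff]
  have h : ∀ i ∈ Finset.range (j+1),
      ((Polynomial.C b * Polynomial.X) ^ i * (Polynomial.C c) ^ (j-i)
        * ((j.choose i : ℕ) : Polynomial ℂ)).coeff t
      = if t = i then (j.choose i : ℂ) * b ^ i * c ^ (j-i) else 0 := by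
    intro i _
    rw [mul_pow, ← Polynomial.C_pow, ← Polynomial.C_pow, ← Polynomial.C_eq_natCast]
    have : Polynomial.C (b ^ i) * Polynomial.X ^ i * Polynomial.C (c ^ (j-i))
        * Polynomial.C ((j.choose i : ℂ))
        = Polynomial.C ((j.choose i : ℂ) * b ^ i * c ^ (j-i)) * Polynomial.X ^ i := by
      simp only [Polynomial.C_mul]; ring
    rw [this, Polynomial.coeff_C_mul, Polynomial.coeff_X_pow]
    split_ifs <;> simp
  rw [Finset.sum_congr rfl h, Finset.sum_ite_eq (Finset.range (j+1)) t]
  split_ifs with ht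
  · rfl
  · have hlt : j < t := by simpa using ht
    simp [Nat.choose_eq_zero_of_lt hlt]

/-- Fourier series of a finitely supported 1D filter. -/
noncomputable def fhat1 (u : ℤ → ℂ) (ω : ℝ) : ℂ :=
  ∑ᶠ k : ℤ, u k * Complex.exp (-(Complex.I) * (k : ℂ) * (ω : ℂ))

/-- Fourier series of a finitely supported 2D filter. -/
noncomputable def fhat2 (a : ℤ × ℤ → ℂ) (ω : ℝ × ℝ) : ℂ :=
  ∑ᶠ k : ℤ × ℤ, a k * Complex.exp (-(Complex.I) * ((k.1 : ℂ) * (ω.1 : ℂ) + (k.2 : ℂ) * (ω.2 : ℂ)))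

/-- Order `m` sum rules with respect to the quincunx matrix `M_{√2}`. -/
def SumRules2D (a : ℤ × ℤ → ℂ) (m : ℕ) : Prop :=
  fhat2 a (0, 0) = 1 ∧ ∀ μ : ℕ × ℕ, μ.1 + μ.2 < m →
    ∑ᶠ k : ℤ × ℤ, ((-1 : ℂ) ^ (k.1 + k.2) * a k * (k.1 : ℂ) ^ μ.1 * (k.2 : ℂ) ^ μ.2) = 0

/-- A 1D filter has order `n` linear-phase moments with phase `1/2`. -/
def LPM1D (u : ℤ → ℂ) (n : ℕ) : Prop :=
  ∀ j : ℕ, j < n → ∑ᶠ k : ℤ, u k * (k : ℂ) ^ j = (1 / 2 : ℂ) ^ j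

theorem stmt_7 (u : ℤ → ℂ) (hufin : (Function.support u).Finite) (hu0 : fhat1 u 0 = 1)
    (n : ℕ) (hn : 1 ≤ n)
    (a : ℤ × ℤ → ℂ) (hafin : (Function.support a).Finite)
    (hfa : ∀ ω : ℝ × ℝ, fhat2 a ω
      = (1 / 2 : ℂ) * (fhat1 u (ω.1 + ω.2)
          + fhat1 u (ω.1 - ω.2) * Complex.exp (-(Complex.I) * (ω.2 : ℂ)))) :
    SumRules2D a n ↔ LPM1D u n := by
  classical
  set su := hufin.toFinset with hsu
  set sa := hafin.toFinset with hsa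
  have hfhat1 : ∀ ω : ℝ, fhat1 u ω = ∑ k ∈ su, u k * Complex.exp (-(Complex.I) * k * ω) := by
    intro ω
    apply finsum_eq_finset_sum_of_support_subset
    intro k hk
    rw [hsu, Set.Finite.coe_toFinset]
    intro h0
    exact hk (by simp [h0])
  have hfhat2 : ∀ ω : ℝ × ℝ, fhat2 a ω
      = ∑ k ∈ sa, a k * Complex.exp (-(Complex.I) * ((k.1:ℂ)*ω.1 + (k.2:ℂ)*ω.2)) := by
    intro ω
    apply finsum_eq_finset_sum_of_support_subset
    intro k hk
    rw [hsa, Set.Finite.coe_toFinset]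
    intro h0
    exact hk (by simp [h0])
  have hMconv : ∀ j : ℕ, (∑ᶠ k : ℤ, u k * (k:ℂ)^j) = ∑ k ∈ su, u k * (k:ℂ)^j := by
    intro j
    apply finsum_eq_finset_sum_of_support_subset
    intro k hk
    rw [hsu, Set.Finite.coe_toFinset]
    intro h0
    exact hk (by simp [h0])
  have hSconv : ∀ p q : ℕ,
      (∑ᶠ k : ℤ×ℤ, ((-1:ℂ)^(k.1+k.2) * a k * (k.1:ℂ)^p * (k.2:ℂ)^q))
      = ∑ k ∈ sa, (-1:ℂ)^(k.1+k.2) * a k * (k.1:ℂ)^p * (k.2:ℂ)^q := by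
    intro p q
    apply finsum_eq_finset_sum_of_support_subset
    intro k hk
    rw [hsa, Set.Finite.coe_toFinset]
    intro h0
    exact hk (by simp [h0])
  have hM0 : (∑ k ∈ su, u k * (k:ℂ)^0) = 1 := by
    rw [← hu0, hfhat1 0]
    apply Finset.sum_congr rfl
    intro k _
    simp
  have hm1 : ∀ m : ℤ, Complex.exp ((m:ℂ) * (-(π:ℂ) * I)) = (-1:ℂ)^m := by
    intro m
    rw [Complex.exp_int_mul]
    congr 1
    rw [show (-(π:ℂ) * I) = -((π:ℂ)*I) by ring, Complex.exp_neg, Complex.exp_pi_mul_I]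
    norm_num
  have hone : ∀ m : ℤ, Complex.exp ((m:ℂ) * (-(2*(π:ℂ)) * I)) = 1 := by
    intro m
    rw [Complex.exp_int_mul]
    rw [show (-(2*(π:ℂ)) * I) = -(2*(π:ℂ)*I) by ring, Complex.exp_neg, Complex.exp_two_pi_mul_I]
    norm_num
  have hpi : Complex.exp (-(π:ℂ) * I) = -1 := by
    rw [show (-(π:ℂ) * I) = -((π:ℂ)*I) by ring, Complex.exp_neg, Complex.exp_pi_mul_I]
    norm_num
  have key : ∀ (x y : ℝ) (j : ℕ),
      ∑ k ∈ sa, ((-1:ℂ)^(k.1+k.2) * a k) * ((k.1:ℂ) * x + (k.2:ℂ) * y)^j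
        = ∑ k ∈ su, (u k / 2) * ((k:ℂ) * ((x:ℂ) + (y:ℂ)))^j
          - ∑ k ∈ su, (u k / 2) * ((k:ℂ) * ((x:ℂ) - (y:ℂ)) + (y:ℂ))^j := by
    intro x y j
    have hFG : (fun ε : ℝ => ∑ k ∈ sa, ((-1:ℂ)^(k.1+k.2) * a k) *
          Complex.exp ((-I * ((k.1:ℂ)*x + (k.2:ℂ)*y)) * ε))
        = fun ε : ℝ => ∑ p ∈ su.disjSum su,
            (Sum.elim (fun k : ℤ => u k / 2) (fun k : ℤ => -(u k) / 2) p) *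
            Complex.exp ((Sum.elim (fun k : ℤ => -I * ((k:ℂ) * ((x:ℂ)+(y:ℂ))))
              (fun k : ℤ => -I * ((k:ℂ) * ((x:ℂ)-(y:ℂ)) + (y:ℂ))) p) * ε) := by
      funext ε
      have h1 : fhat2 a (π + ε*x, π + ε*y)
          = ∑ k ∈ sa, ((-1:ℂ)^(k.1+k.2) * a k) *
              Complex.exp ((-I * ((k.1:ℂ)*x + (k.2:ℂ)*y)) * ε) := by
        rw [hfhat2]
        apply Finset.sum_congr rfl
        intro k _
        have harg : -(Complex.I) * ((k.1:ℂ) * ((π + ε*x : ℝ):ℂ) + (k.2:ℂ) * ((π + ε*y : ℝ):ℂ))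
            = ((k.1 + k.2 : ℤ):ℂ) * (-(π:ℂ) * I) + (-I * ((k.1:ℂ)*x + (k.2:ℂ)*y)) * ε := by
          push_cast; ring
        rw [harg, Complex.exp_add, hm1]
        ring
      have h2 : (1/2 : ℂ) * fhat1 u ((π + ε*x) + (π + ε*y))
          = ∑ k ∈ su, (u k / 2) * Complex.exp ((-I * ((k:ℂ)*((x:ℂ)+(y:ℂ)))) * ε) := by
        rw [hfhat1, Finset.mul_sum]
        apply Finset.sum_congr rfl
        intro k _
        have harg : -(Complex.I) * (k:ℂ) * (((π + ε*x) + (π + ε*y) : ℝ):ℂ)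
            = ((k : ℤ):ℂ) * (-(2*(π:ℂ)) * I) + (-I * ((k:ℂ)*((x:ℂ)+(y:ℂ)))) * ε := by
          push_cast; ring
        rw [harg, Complex.exp_add, hone]
        ring
      have h3 : (1/2 : ℂ) * (fhat1 u ((π + ε*x) - (π + ε*y))
            * Complex.exp (-(Complex.I) * (((π + ε*y):ℝ):ℂ)))
          = ∑ k ∈ su, (-(u k) / 2) * Complex.exp ((-I * ((k:ℂ)*((x:ℂ)-(y:ℂ)) + (y:ℂ))) * ε) := by
        rw [hfhat1, Finset.sum_mul, Finset.mul_sum]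
        apply Finset.sum_congr rfl
        intro k _
        have hcomb : Complex.exp (-(Complex.I) * (k:ℂ) * (((π + ε*x) - (π + ε*y) : ℝ):ℂ))
              * Complex.exp (-(Complex.I) * (((π + ε*y):ℝ):ℂ))
            = Complex.exp (-(π:ℂ) * I)
              * Complex.exp ((-I * ((k:ℂ)*((x:ℂ)-(y:ℂ)) + (y:ℂ))) * ε) := by
          rw [← Complex.exp_add, ← Complex.exp_add]
          congr 1
          push_cast; ring
        rw [mul_assoc, hcomb, hpi]
        ring
      rw [← h1, hfa, Finset.sum_disjSum]
      simp only [Sum.elim_inl, Sum.elim_inr]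
      rw [← h2, ← h3]
      ring
    have hder := congrArg (fun f => iteratedDeriv j f 0) hFG
    rw [expSum_iteratedDeriv_zero, expSum_iteratedDeriv_zero, Finset.sum_disjSum] at hder
    simp only [Sum.elim_inl, Sum.elim_inr] at hder
    have hIj : ((-I)^j : ℂ) ≠ 0 := pow_ne_zero _ (neg_ne_zero.mpr I_ne_zero)
    apply mul_left_cancel₀ hIj
    calc (-I)^j * (∑ k ∈ sa, ((-1:ℂ)^(k.1+k.2) * a k) * ((k.1:ℂ)*x + (k.2:ℂ)*y)^j)
        = ∑ k ∈ sa, ((-1:ℂ)^(k.1+k.2) * a k) * (-I * ((k.1:ℂ)*x + (k.2:ℂ)*y))^j := by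
          rw [Finset.mul_sum]
          exact Finset.sum_congr rfl (fun k _ => by simp only [mul_pow]; ring)
      _ = (∑ k ∈ su, (u k / 2) * (-I * ((k:ℂ)*((x:ℂ)+(y:ℂ))))^j)
          + ∑ k ∈ su, (-(u k) / 2) * (-I * ((k:ℂ)*((x:ℂ)-(y:ℂ)) + (y:ℂ)))^j := hder
      _ = (-I)^j * ((∑ k ∈ su, (u k / 2) * ((k:ℂ)*((x:ℂ)+(y:ℂ)))^j)
          - ∑ k ∈ su, (u k / 2) * ((k:ℂ)*((x:ℂ)-(y:ℂ)) + (y:ℂ))^j) := by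
          rw [mul_sub, Finset.mul_sum, Finset.mul_sum, ← Finset.sum_sub_distrib,
            ← Finset.sum_add_distrib]
          exact Finset.sum_congr rfl (fun k _ => by simp only [mul_pow]; ring)
  constructor
  · rintro ⟨h1, h2⟩
    intro j hj
    rw [hMconv]
    have hS0 : ∀ p q : ℕ, p + q < n →
        (∑ k ∈ sa, (-1:ℂ)^(k.1+k.2) * a k * (k.1:ℂ)^p * (k.2:ℂ)^q) = 0 := by
      intro p q h
      rw [← hSconv]
      exact h2 (p, q) h
    have hkey := key 1 1 j
    simp only [Complex.ofReal_one, mul_one] at hkey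
    have hL : ∑ k ∈ sa, ((-1:ℂ)^(k.1+k.2) * a k) * ((k.1:ℂ) + (k.2:ℂ))^j = 0 := by
      have expand : ∀ k : ℤ×ℤ, ((-1:ℂ)^(k.1+k.2) * a k) * ((k.1:ℂ) + (k.2:ℂ))^j
          = ∑ i ∈ Finset.range (j+1),
              ((-1:ℂ)^(k.1+k.2) * a k * (k.1:ℂ)^i * (k.2:ℂ)^(j-i)) * (j.choose i : ℂ) := by
        intro k
        rw [add_pow, Finset.mul_sum]
        exact Finset.sum_congr rfl fun i _ => by ring
      rw [Finset.sum_congr rfl (fun k _ => expand k), Finset.sum_comm]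
      apply Finset.sum_eq_zero
      intro i hi
      rw [← Finset.sum_mul, hS0 i (j-i) (by have := Finset.mem_range.mp hi; omega), zero_mul]
    rw [hL] at hkey
    have hR1 : ∑ k ∈ su, (u k / 2) * ((k:ℂ) * ((1:ℂ) + 1))^j
        = (2:ℂ)^j/2 * ∑ k ∈ su, u k * (k:ℂ)^j := by
      rw [Finset.mul_sum]
      apply Finset.sum_congr rfl
      intro k _
      rw [show ((k:ℂ) * ((1:ℂ)+1)) = 2 * k by ring]
      simp only [mul_pow]
      ring
    have hR2 : ∑ k ∈ su, (u k / 2) * ((k:ℂ) * ((1:ℂ) - 1) + 1)^j = (1/2 : ℂ) := by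
      have : ∀ k : ℤ, (u k / 2) * ((k:ℂ) * ((1:ℂ) - 1) + 1)^j = (1/2) * (u k * (k:ℂ)^0) := by
        intro k
        rw [show ((k:ℂ) * ((1:ℂ)-1) + 1) = 1 by ring, one_pow, pow_zero]
        ring
      rw [Finset.sum_congr rfl (fun k _ => this k), ← Finset.mul_sum, hM0, mul_one]
    rw [hR1, hR2] at hkey
    have h2j : ((2:ℂ)^j) ≠ 0 := pow_ne_zero _ two_ne_zero
    have hT : (∑ k ∈ su, u k * (k:ℂ)^j) = ((2:ℂ)^j)⁻¹ := by
      field_simp at hkey ⊢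
      linear_combination -hkey
    rw [hT]
    rw [div_pow, one_pow, one_div]
  · intro hlpm
    have hMval : ∀ i : ℕ, i < n → (∑ k ∈ su, u k * (k:ℂ)^i) = (1/2:ℂ)^i := by
      intro i hi
      rw [← hMconv]
      exact hlpm i hi
    constructor
    · rw [hfa (0, 0)]
      norm_num [hu0]
    · intro μ hμ
      set j := μ.1 + μ.2 with hjdef
      rw [hSconv]
      have hx : ∀ x : ℝ, ∑ k ∈ sa, ((-1:ℂ)^(k.1+k.2) * a k) * ((k.1:ℂ) * (x:ℂ) + (k.2:ℂ))^j = 0 := by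
        intro x
        have hkx := key x 1 j
        simp only [Complex.ofReal_one, mul_one] at hkx
        rw [hkx]
        have hR1 : ∑ k ∈ su, (u k / 2) * ((k:ℂ) * ((x:ℂ) + 1))^j
            = 1/2 * (((x:ℂ)+1)/2)^j := by
          have hterm : ∀ k : ℤ, (u k / 2) * ((k:ℂ) * ((x:ℂ) + 1))^j
              = ((x:ℂ)+1)^j/2 * (u k * (k:ℂ)^j) := by
            intro k
            simp only [mul_pow]
            ring
          rw [Finset.sum_congr rfl (fun k _ => hterm k), ← Finset.mul_sum, hMval j hμ,
            div_pow, div_pow]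
          ring
        have hR2 : ∑ k ∈ su, (u k / 2) * ((k:ℂ) * ((x:ℂ) - 1) + 1)^j
            = 1/2 * (((x:ℂ)+1)/2)^j := by
          have expand : ∀ k : ℤ, (u k / 2) * ((k:ℂ) * ((x:ℂ) - 1) + 1)^j
              = ∑ i ∈ Finset.range (j+1),
                  (((x:ℂ)-1)^i * (j.choose i : ℂ)/2) * (u k * (k:ℂ)^i) := by
            intro k
            rw [add_pow, Finset.mul_sum]
            apply Finset.sum_congr rfl
            intro i _
            simp only [mul_pow, one_pow]
            ring
          rw [Finset.sum_congr rfl (fun k _ => expand k), Finset.sum_comm]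
          have inner : ∀ i ∈ Finset.range (j+1),
              (∑ k ∈ su, (((x:ℂ)-1)^i * (j.choose i : ℂ)/2) * (u k * (k:ℂ)^i))
              = 1/2 * ((((x:ℂ)-1)/2)^i * (1:ℂ)^(j-i) * (j.choose i : ℂ)) := by
            intro i hi
            have hin : i < n := by
              have := Finset.mem_range.mp hi
              omega
            rw [← Finset.mul_sum, hMval i hin, div_pow, div_pow]
            ring
          rw [Finset.sum_congr rfl inner, ← Finset.mul_sum, ← add_pow,
            show ((x:ℂ)-1)/2 + 1 = ((x:ℂ)+1)/2 by ring]
        rw [hR1, hR2, sub_self]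
      set p : Polynomial ℂ := ∑ k ∈ sa, Polynomial.C ((-1:ℂ)^(k.1+k.2) * a k) *
        (Polynomial.C (k.1:ℂ) * Polynomial.X + Polynomial.C (k.2:ℂ))^j with hp
      have heval : ∀ x : ℝ, p.eval (x:ℂ) = 0 := by
        intro x
        rw [hp, Polynomial.eval_finset_sum, ← hx x]
        apply Finset.sum_congr rfl
        intro k _
        simp
      have hp0 : p = 0 := by
        apply Polynomial.eq_zero_of_infinite_isRoot
        apply Set.Infinite.mono (s := Set.range (fun x : ℝ => (x:ℂ)))
        · rintro z ⟨x, rfl⟩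
          exact heval x
        · exact Set.infinite_range_of_injective Complex.ofReal_injective
      have hco := congrArg (fun q => Polynomial.coeff q μ.1) hp0
      simp only [Polynomial.coeff_zero] at hco
      rw [hp, Polynomial.finset_sum_coeff] at hco
      have hcoeff : ∀ k ∈ sa, (Polynomial.C ((-1:ℂ)^(k.1+k.2) * a k) *
            (Polynomial.C (k.1:ℂ) * Polynomial.X + Polynomial.C (k.2:ℂ))^j).coeff μ.1
          = (j.choose μ.1 : ℂ) * ((-1:ℂ)^(k.1+k.2) * a k * (k.1:ℂ)^μ.1 * (k.2:ℂ)^μ.2) := by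
        intro k _
        rw [Polynomial.coeff_C_mul, coeff_linear_pow, show j - μ.1 = μ.2 from by omega]
        ring
      rw [Finset.sum_congr rfl hcoeff, ← Finset.mul_sum] at hco
      have hne : (j.choose μ.1 : ℂ) ≠ 0 := by
        have : 0 < j.choose μ.1 := Nat.choose_pos (by omega)
        exact_mod_cast this.ne'
      exact (mul_eq_zero.mp hco).resolve_left hne
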